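/- Let n be a positive integer and a ≥ 0 with na ≤ 1/2. Then the sum over k from 1 to n of binom(n,k) · sqrt((2k)!) · (a/2)^k is at most 2na. -/

import Mathlib

open Finset

theorem sum_choose_sqrt_factorial_le (n : ℕ) (hn : 0 < n) (a : ℝ) (ha : 0 ≤ a)
    (hna : (n : ℝ) * a ≤ 1 / 2) :
    ∑ k ∈ Finset.Icc 1 n,
        (n.choose k : ℝ) * Real.sqrt ((2 * k).factorial) * (a / 2) ^ k
      ≤ 2 * n * a := by
  set x : ℝ := (n : ℝ) * a with hx
  have hx0 : 0 ≤ x := mul_nonneg (Nat.cast_nonneg n) ha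
  have step : ∀ k ∈ Finset.Icc 1 n,
      (n.choose k : ℝ) * Real.sqrt ((2 * k).factorial) * (a / 2) ^ k
        ≤ x * (1 / 2 : ℝ) ^ (k - 1) := by
    intro k hk
    obtain ⟨hk1, hkn⟩ := Finset.mem_Icc.mp hk
    -- (2k)! ≤ 4^k * (k!)^2
    have hfact : ((2 * k).factorial : ℝ) ≤ ((2 : ℝ) ^ k * (k.factorial : ℝ)) ^ 2 := by
      have h1 : (2 * k).factorial = (2 * k).choose k * (k.factorial * k.factorial) := by
        have h := Nat.choose_mul_factorial_mul_factorial (show k ≤ 2 * k by omega)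
        rw [show 2 * k - k = k from by omega] at h
        rw [← h, Nat.mul_assoc]
      have h2 : (2 * k).choose k ≤ 4 ^ k := by
        calc (2 * k).choose k ≤ (2 * k + 1).choose k :=
              Nat.choose_le_choose k (Nat.le_succ _)
          _ ≤ 4 ^ k := Nat.choose_middle_le_pow k
      have : (2 * k).factorial ≤ 4 ^ k * (k.factorial * k.factorial) := by
        rw [h1]; exact Nat.mul_le_mul_right _ h2
      calc ((2 * k).factorial : ℝ) ≤ ((4 ^ k * (k.factorial * k.factorial) : ℕ) : ℝ) := by
            exact_mod_cast this
        _ = ((2 : ℝ) ^ k * (k.factorial : ℝ)) ^ 2 := by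
            push_cast
            rw [show (4 : ℝ) = 2 ^ 2 by norm_num, ← pow_mul, mul_comm 2 k, pow_mul]
            ring
    have hsqrt : Real.sqrt ((2 * k).factorial) ≤ (2 : ℝ) ^ k * (k.factorial : ℝ) := by
      have h2 : (0 : ℝ) ≤ (2 : ℝ) ^ k * (k.factorial : ℝ) := by positivity
      calc Real.sqrt ((2 * k).factorial)
          ≤ Real.sqrt (((2 : ℝ) ^ k * (k.factorial : ℝ)) ^ 2) := Real.sqrt_le_sqrt hfact
        _ = (2 : ℝ) ^ k * (k.factorial : ℝ) := Real.sqrt_sq h2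
    have hdesc : (n.choose k : ℝ) * (k.factorial : ℝ) ≤ (n : ℝ) ^ k := by
      have : n.choose k * k.factorial ≤ n ^ k := by
        rw [mul_comm, ← Nat.descFactorial_eq_factorial_mul_choose]
        exact Nat.descFactorial_le_pow n k
      exact_mod_cast this
    have hterm : (n.choose k : ℝ) * Real.sqrt ((2 * k).factorial) * (a / 2) ^ k ≤ x ^ k := by
      have h0 : (0 : ℝ) ≤ (a / 2) ^ k := by positivity
      calc (n.choose k : ℝ) * Real.sqrt ((2 * k).factorial) * (a / 2) ^ k
          ≤ (n.choose k : ℝ) * ((2 : ℝ) ^ k * (k.factorial : ℝ)) * (a / 2) ^ k := by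
            apply mul_le_mul_of_nonneg_right _ h0
            exact mul_le_mul_of_nonneg_left hsqrt (Nat.cast_nonneg _)
        _ = (n.choose k : ℝ) * (k.factorial : ℝ) * a ^ k := by
            rw [div_pow]
            field_simp
        _ ≤ (n : ℝ) ^ k * a ^ k := by
            apply mul_le_mul_of_nonneg_right hdesc (by positivity)
        _ = x ^ k := by rw [hx, mul_pow]
    have hxhalf : x ≤ 1 / 2 := hna
    calc (n.choose k : ℝ) * Real.sqrt ((2 * k).factorial) * (a / 2) ^ k ≤ x ^ k := hterm
      _ = x * x ^ (k - 1) := by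
          rw [← pow_succ']
          congr 1
          omega
      _ ≤ x * (1 / 2 : ℝ) ^ (k - 1) := by
          apply mul_le_mul_of_nonneg_left _ hx0
          exact pow_le_pow_left₀ hx0 hxhalf _
  calc ∑ k ∈ Finset.Icc 1 n,
        (n.choose k : ℝ) * Real.sqrt ((2 * k).factorial) * (a / 2) ^ k
      ≤ ∑ k ∈ Finset.Icc 1 n, x * (1 / 2 : ℝ) ^ (k - 1) := Finset.sum_le_sum step
    _ = x * ∑ j ∈ Finset.range n, (1 / 2 : ℝ) ^ j := by
        rw [Finset.mul_sum]
        rw [show Finset.Icc 1 n = Finset.Icc (0 + 1) (n - 1 + 1) by congr 1; omega]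
        rw [← Finset.map_add_right_Icc, Finset.sum_map]
        simp only [Function.Embedding.coeFn_mk, addRightEmbedding_apply]
        rw [show Finset.Icc 0 (n - 1) = Finset.range n by
          rw [Finset.range_eq_Ico, ← Finset.Ico_add_one_right_eq_Icc]; congr 1; omega]
        simp
    _ ≤ x * 2 := by
        apply mul_le_mul_of_nonneg_left (sum_geometric_two_le n) hx0
    _ = 2 * n * a := by rw [hx]; ring
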